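/- Let n ≥ 5 and k₁,…,k_n ≥ 1 be integers, and let M ≥ 1 be a real number. Suppose that for some index j₀ with 1 ≤ j₀ ≤ n the inequalities a_{j₀} ≥ M·z_{j₀}, b_{j₀} ≥ M·(y_{j₀} + z_{j₀}), c_{j₀} ≥ M·(x_{j₀} + y_{j₀}) hold. Then these three inequalities hold for every j with j₀ ≤ j ≤ n, and moreover ‖A₃(k₁)A₃(k₂)⋯A₃(k_n)‖_c ≤ (1/M)·‖B₃(k₁)B₃(k₂)⋯B₃(k_n)‖_c. -/
import Mathlib


/-- The Bruin–Troubetzkoy matrix `A₃(k)` with rows `(0, k, k−1)`, `(1, 0, 0)`, `(0, 1, 1)`. -/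
def A3 (k : ℤ) : Matrix (Fin 3) (Fin 3) ℝ :=
  !![0, (k : ℝ), (k : ℝ) - 1; 1, 0, 0; 0, 1, 1]

/-- The matrix `B₃(k)` with rows `(0, 1, 0)`, `(1, 0, 1)`, `(k−1, 0, k)`. -/
def B3 (k : ℤ) : Matrix (Fin 3) (Fin 3) ℝ :=
  !![0, 1, 0; 1, 0, 1; (k : ℝ) - 1, 0, (k : ℝ)]

/-- The column norm of a 3×3 real matrix: the largest `L¹`-norm of a column. -/
noncomputable def cnorm (X : Matrix (Fin 3) (Fin 3) ℝ) : ℝ :=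
  Finset.univ.sup' Finset.univ_nonempty (fun j : Fin 3 => ∑ i : Fin 3, |X i j|)

lemma range_map_prod_succ {G} [Monoid G] (f : ℕ → G) (m : ℕ) :
    ((List.range (m+1)).map f).prod = ((List.range m).map f).prod * f m := by
  rw [List.range_succ, List.map_append, List.prod_append]; simp

lemma drop_map_prod {G} [Monoid G] (f : ℕ → G) {n j : ℕ} (h : j < n) :
    (((List.range n).drop (n - (j+1))).map f).prod
      = f (n - j - 1) * (((List.range n).drop (n - j)).map f).prod := by
  have h1 : n - (j+1) < (List.range n).length := by simp; omega
  rw [List.drop_eq_getElem_cons h1]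
  have e1 : n - (j+1) = n - j - 1 := by omega
  have e2 : n - j - 1 + 1 = n - j := by omega
  rw [List.getElem_range, e1, e2, List.map_cons, List.prod_cons]

lemma drop_one {n : ℕ} (h : 1 ≤ n) : (List.range n).drop (n - 1) = [n-1] := by
  rw [List.drop_eq_getElem_cons (by simp; omega), List.getElem_range]
  have : n - 1 + 1 = n := by omega
  simp [this]

lemma A3_nonneg {K : ℤ} (h : 1 ≤ K) (p q : Fin 3) : 0 ≤ A3 K p q := by
  have h' : (1:ℝ) ≤ (K:ℝ) := by exact_mod_cast h
  fin_cases p <;> fin_cases q <;> simp [A3] <;> linarith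

lemma A3_mul_apply0 (K : ℤ) (T : Matrix (Fin 3) (Fin 3) ℝ) (q : Fin 3) :
    (A3 K * T) 0 q = ((K:ℝ) - 1) * T 2 q + (K:ℝ) * T 1 q := by
  simp [Matrix.mul_apply, Fin.sum_univ_three, A3]; ring

lemma A3_mul_apply1 (K : ℤ) (T : Matrix (Fin 3) (Fin 3) ℝ) (q : Fin 3) :
    (A3 K * T) 1 q = T 0 q := by
  simp [Matrix.mul_apply, Fin.sum_univ_three, A3]

lemma A3_mul_apply2 (K : ℤ) (T : Matrix (Fin 3) (Fin 3) ℝ) (q : Fin 3) :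
    (A3 K * T) 2 q = T 1 q + T 2 q := by
  simp [Matrix.mul_apply, Fin.sum_univ_three, A3]

lemma B3_mul_apply0 (K : ℤ) (T : Matrix (Fin 3) (Fin 3) ℝ) (q : Fin 3) :
    (B3 K * T) 0 q = T 1 q := by
  simp [Matrix.mul_apply, Fin.sum_univ_three, B3]

lemma B3_mul_apply1 (K : ℤ) (T : Matrix (Fin 3) (Fin 3) ℝ) (q : Fin 3) :
    (B3 K * T) 1 q = T 0 q + T 2 q := by
  simp [Matrix.mul_apply, Fin.sum_univ_three, B3]

lemma B3_mul_apply2 (K : ℤ) (T : Matrix (Fin 3) (Fin 3) ℝ) (q : Fin 3) :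
    (B3 K * T) 2 q = ((K:ℝ) - 1) * T 0 q + (K:ℝ) * T 2 q := by
  simp [Matrix.mul_apply, Fin.sum_univ_three, B3]

lemma mulA3_sum0 (K : ℤ) (R : Matrix (Fin 3) (Fin 3) ℝ) :
    ∑ p : Fin 3, (R * A3 K) p 0 = ∑ p : Fin 3, R p 1 := by
  simp [Matrix.mul_apply, Fin.sum_univ_three, A3]

lemma mulA3_sum1 (K : ℤ) (R : Matrix (Fin 3) (Fin 3) ℝ) :
    ∑ p : Fin 3, (R * A3 K) p 1 = (K:ℝ) * (∑ p : Fin 3, R p 0) + ∑ p : Fin 3, R p 2 := by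
  simp [Matrix.mul_apply, Fin.sum_univ_three, A3]; ring

lemma mulA3_sum2 (K : ℤ) (R : Matrix (Fin 3) (Fin 3) ℝ) :
    ∑ p : Fin 3, (R * A3 K) p 2 = ((K:ℝ) - 1) * (∑ p : Fin 3, R p 0) + ∑ p : Fin 3, R p 2 := by
  simp [Matrix.mul_apply, Fin.sum_univ_three, A3]; ring

lemma A3_sums (K : ℤ) :
    (∑ p : Fin 3, A3 K p 0 = 1) ∧ (∑ p : Fin 3, A3 K p 1 = (K:ℝ) + 1) ∧
    (∑ p : Fin 3, A3 K p 2 = (K:ℝ)) := by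
  refine ⟨?_, ?_, ?_⟩ <;> simp [Fin.sum_univ_three, A3]

set_option maxHeartbeats 1000000 in
/-- Lemma on the recursion: if the domination estimates hold at some index `j₀`, they hold
for all later indices, and the column norm of the `A₃` product is at most `1/M` times that
of the `B₃` product.  The sequences `(x_j, y_j, z_j)` and `(a_j, b_j, c_j)` are respectively
the second column of `A₃(k_{n−j+1})⋯A₃(k_n)` and the third column of `B₃(k_{n−j+1})⋯B₃(k_n)`,
here described by their seeds and recursions.  The entries `k₁, …, k_n` are `k 1, …, k n`. -/
theorem induction_on_recursion (n : ℕ) (hn : 5 ≤ n) (k : ℕ → ℤ)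
    (hk : ∀ i, 1 ≤ i → i ≤ n → 1 ≤ k i)
    (x y z a b c : ℕ → ℝ)
    (hx1 : x 1 = (k n : ℝ)) (hy1 : y 1 = 0) (hz1 : z 1 = 1)
    (ha1 : a 1 = 0) (hb1 : b 1 = 1) (hc1 : c 1 = (k n : ℝ))
    (hx : ∀ j, 1 ≤ j → j ≤ n - 1 → x (j + 1) = ((k (n - j) : ℝ) - 1) * z j + (k (n - j) : ℝ) * y j)
    (hy : ∀ j, 1 ≤ j → j ≤ n - 1 → y (j + 1) = x j)
    (hz : ∀ j, 1 ≤ j → j ≤ n - 1 → z (j + 1) = y j + z j)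
    (ha : ∀ j, 1 ≤ j → j ≤ n - 1 → a (j + 1) = b j)
    (hb : ∀ j, 1 ≤ j → j ≤ n - 1 → b (j + 1) = a j + c j)
    (hc : ∀ j, 1 ≤ j → j ≤ n - 1 → c (j + 1) = ((k (n - j) : ℝ) - 1) * a j + (k (n - j) : ℝ) * c j)
    (M : ℝ) (hM : 1 ≤ M)
    (j₀ : ℕ) (hj₀ : 1 ≤ j₀) (hj₀n : j₀ ≤ n)
    (hA : a j₀ ≥ M * z j₀) (hB : b j₀ ≥ M * (y j₀ + z j₀)) (hC : c j₀ ≥ M * (x j₀ + y j₀)) :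
    (∀ j, j₀ ≤ j → j ≤ n →
      a j ≥ M * z j ∧ b j ≥ M * (y j + z j) ∧ c j ≥ M * (x j + y j)) ∧
    cnorm (((List.range n).map (fun i => A3 (k (i + 1)))).prod) ≤
      (1 / M) * cnorm (((List.range n).map (fun i => B3 (k (i + 1)))).prod) := by
  have hMpos : (0:ℝ) < M := lt_of_lt_of_le one_pos hM
  have hkR : ∀ i, 1 ≤ i → i ≤ n → (1:ℝ) ≤ (k i : ℝ) := by
    intro i h1 h2; exact_mod_cast hk i h1 h2
  -- nonnegativity of x, y, z
  have hxyz : ∀ j, 1 ≤ j → j ≤ n → 0 ≤ x j ∧ 0 ≤ y j ∧ 0 ≤ z j := by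
    intro j hj
    induction j, hj using Nat.le_induction with
    | base =>
      intro _
      refine ⟨by rw [hx1]; linarith [hkR n (by omega) le_rfl], by rw [hy1], by rw [hz1]; norm_num⟩
    | succ j hj ih =>
      intro hjn
      have h2 : j ≤ n - 1 := by omega
      obtain ⟨px, py, pz⟩ := ih (by omega)
      have hkk := hkR (n-j) (by omega) (by omega)
      rw [hx j hj h2, hy j hj h2, hz j hj h2]
      refine ⟨?_, px, by linarith⟩
      nlinarith
  -- propagation of the domination estimates
  have prop : ∀ j, j₀ ≤ j → j ≤ n →
      a j ≥ M * z j ∧ b j ≥ M * (y j + z j) ∧ c j ≥ M * (x j + y j) := by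
    intro j hj
    induction j, hj using Nat.le_induction with
    | base => intro _; exact ⟨hA, hB, hC⟩
    | succ j hj ih =>
      intro hjn
      have h1 : 1 ≤ j := le_trans hj₀ hj
      have h2 : j ≤ n - 1 := by omega
      obtain ⟨ia, ib, ic⟩ := ih (by omega)
      obtain ⟨px, py, pz⟩ := hxyz j h1 (by omega)
      have hkk := hkR (n-j) (by omega) (by omega)
      rw [ha j h1 h2, hb j h1 h2, hc j h1 h2, hx j h1 h2, hy j h1 h2, hz j h1 h2]
      refine ⟨by linarith, by linarith, ?_⟩
      have t1 : 0 ≤ ((k (n-j):ℝ) - 1) * (a j - M * z j) :=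
        mul_nonneg (by linarith) (by linarith)
      have t2 : 0 ≤ (k (n-j):ℝ) * (c j - M * (x j + y j)) :=
        mul_nonneg (by linarith) (by linarith)
      have t3 : 0 ≤ M * (((k (n-j):ℝ) - 1) * x j) :=
        mul_nonneg (by linarith) (mul_nonneg (by linarith) px)
      nlinarith [t1, t2, t3]
  -- suffix column identities for A
  have colA : ∀ j, 1 ≤ j → j ≤ n →
      ((((List.range n).drop (n - j)).map (fun i => A3 (k (i+1)))).prod 0 1 = x j ∧
       (((List.range n).drop (n - j)).map (fun i => A3 (k (i+1)))).prod 1 1 = y j ∧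
       (((List.range n).drop (n - j)).map (fun i => A3 (k (i+1)))).prod 2 1 = z j) := by
    intro j hj
    induction j, hj using Nat.le_induction with
    | base =>
      intro _
      rw [drop_one (by omega)]
      have e : n - 1 + 1 = n := by omega
      simp only [List.map_cons, List.map_nil, List.prod_cons, List.prod_nil, mul_one, e]
      rw [hx1, hy1, hz1]
      refine ⟨by simp [A3], by simp [A3], by simp [A3]⟩
    | succ j hj ih =>
      intro hjn
      rw [drop_map_prod _ (show j < n by omega)]
      obtain ⟨e0, e1, e2⟩ := ih (by omega)
      have es : n - j - 1 + 1 = n - j := by omega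
      have h2 : j ≤ n - 1 := by omega
      rw [es, hx j hj h2, hy j hj h2, hz j hj h2,
        A3_mul_apply0, A3_mul_apply1, A3_mul_apply2, e0, e1, e2]
      exact ⟨rfl, rfl, rfl⟩
  -- suffix column identities for B
  have colB : ∀ j, 1 ≤ j → j ≤ n →
      ((((List.range n).drop (n - j)).map (fun i => B3 (k (i+1)))).prod 0 2 = a j ∧
       (((List.range n).drop (n - j)).map (fun i => B3 (k (i+1)))).prod 1 2 = b j ∧
       (((List.range n).drop (n - j)).map (fun i => B3 (k (i+1)))).prod 2 2 = c j) := by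
    intro j hj
    induction j, hj using Nat.le_induction with
    | base =>
      intro _
      rw [drop_one (by omega)]
      have e : n - 1 + 1 = n := by omega
      simp only [List.map_cons, List.map_nil, List.prod_cons, List.prod_nil, mul_one, e]
      rw [ha1, hb1, hc1]
      refine ⟨by simp [B3], by simp [B3], by simp [B3]⟩
    | succ j hj ih =>
      intro hjn
      rw [drop_map_prod _ (show j < n by omega)]
      obtain ⟨e0, e1, e2⟩ := ih (by omega)
      have es : n - j - 1 + 1 = n - j := by omega
      have h2 : j ≤ n - 1 := by omega
      rw [es, ha j hj h2, hb j hj h2, hc j hj h2,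
        B3_mul_apply0, B3_mul_apply1, B3_mul_apply2, e0, e1, e2]
      exact ⟨rfl, rfl, rfl⟩
  -- prefix column-sum estimates for the A-product
  have pre : ∀ m, 1 ≤ m → m ≤ n →
      (∀ p q : Fin 3, 0 ≤ (((List.range m).map (fun i => A3 (k (i+1)))).prod) p q) ∧
      (∑ p : Fin 3, (((List.range m).map (fun i => A3 (k (i+1)))).prod) p 0 ≤
        ∑ p : Fin 3, (((List.range m).map (fun i => A3 (k (i+1)))).prod) p 1) ∧
      (∑ p : Fin 3, (((List.range m).map (fun i => A3 (k (i+1)))).prod) p 1 ≤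
        ∑ p : Fin 3, (((List.range m).map (fun i => A3 (k (i+1)))).prod) p 0 +
        ∑ p : Fin 3, (((List.range m).map (fun i => A3 (k (i+1)))).prod) p 2) ∧
      (∑ p : Fin 3, (((List.range m).map (fun i => A3 (k (i+1)))).prod) p 2 ≤
        ∑ p : Fin 3, (((List.range m).map (fun i => A3 (k (i+1)))).prod) p 1) := by
    intro m hm
    induction m, hm using Nat.le_induction with
    | base =>
      intro _
      have hR1 : ((List.range 1).map (fun i => A3 (k (i+1)))).prod = A3 (k 1) := by
        have hr : List.range 1 = [0] := rfl
        rw [hr, List.map_cons, List.map_nil, List.prod_cons, List.prod_nil, mul_one]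
      rw [hR1]
      have hk1 := hkR 1 le_rfl (by omega)
      obtain ⟨s0, s1, s2⟩ := A3_sums (k 1)
      exact ⟨A3_nonneg (hk 1 le_rfl (by omega)),
        by rw [s0, s1]; linarith, by rw [s0, s1, s2]; linarith, by rw [s1, s2]; linarith⟩
    | succ m hm ih =>
      intro hmn
      obtain ⟨hnn, i01, i102, i21⟩ := ih (by omega)
      have hk1 := hkR (m+1) (by omega) (by omega)
      have hAnn := A3_nonneg (hk (m+1) (by omega) (by omega))
      rw [range_map_prod_succ]
      have S0nn : 0 ≤ ∑ p : Fin 3,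
          (((List.range m).map (fun i => A3 (k (i+1)))).prod) p 0 :=
        Finset.sum_nonneg fun p _ => hnn p 0
      refine ⟨?_, ?_, ?_, ?_⟩
      · intro p q
        rw [Matrix.mul_apply]
        exact Finset.sum_nonneg fun r _ => mul_nonneg (hnn p r) (hAnn r q)
      · rw [mulA3_sum0, mulA3_sum1]
        nlinarith [mul_nonneg (show (0:ℝ) ≤ (k (m+1):ℝ) - 1 by linarith) S0nn]
      · rw [mulA3_sum0, mulA3_sum1, mulA3_sum2]
        nlinarith
      · rw [mulA3_sum1, mulA3_sum2]
        nlinarith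
  -- assemble the norm estimate
  obtain ⟨Pnn, p01, p102, p21⟩ := pre n (by omega) le_rfl
  have hdrop : n - n = 0 := Nat.sub_self n
  obtain ⟨ex, ey, ez⟩ := colA n (by omega) le_rfl
  obtain ⟨ea, eb, ec⟩ := colB n (by omega) le_rfl
  rw [hdrop, List.drop_zero] at ex ey ez ea eb ec
  obtain ⟨pa, pb, pc⟩ := prop n hj₀n le_rfl
  obtain ⟨pxn, pyn, pzn⟩ := hxyz n (by omega) le_rfl
  refine ⟨prop, ?_⟩
  set P := ((List.range n).map (fun i => A3 (k (i+1)))).prod with hP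
  set Q := ((List.range n).map (fun i => B3 (k (i+1)))).prod with hQ
  have habs : ∀ q : Fin 3, ∑ i : Fin 3, |P i q| = ∑ i : Fin 3, P i q := by
    intro q; exact Finset.sum_congr rfl fun i _ => abs_of_nonneg (Pnn i q)
  have hsum1 : ∑ i : Fin 3, P i 1 = x n + y n + z n := by
    rw [Fin.sum_univ_three, ex, ey, ez]
  have hPle : cnorm P ≤ x n + y n + z n := by
    apply Finset.sup'_le
    intro q _
    rw [habs q, ← hsum1]
    fin_cases q
    · exact p01
    · exact le_refl _
    · exact p21
  have hQge : a n + b n + c n ≤ cnorm Q := by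
    have h1 : a n + b n + c n ≤ ∑ i : Fin 3, |Q i 2| := by
      rw [Fin.sum_univ_three]
      have := le_abs_self (Q 0 2)
      have := le_abs_self (Q 1 2)
      have := le_abs_self (Q 2 2)
      rw [← ea, ← eb, ← ec]
      linarith
    exact le_trans h1 (Finset.le_sup' (fun q : Fin 3 => ∑ i : Fin 3, |Q i q|)
      (Finset.mem_univ (2 : Fin 3)))
  have key : M * cnorm P ≤ cnorm Q := by
    have h1 : M * cnorm P ≤ M * (x n + y n + z n) :=
      mul_le_mul_of_nonneg_left hPle (by linarith)
    have h2 : M * (x n + y n + z n) ≤ a n + b n + c n := by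
      nlinarith [mul_nonneg (show (0:ℝ) ≤ M by linarith) pyn,
        mul_nonneg (show (0:ℝ) ≤ M by linarith) pzn]
    linarith
  have hfin : cnorm P = (1/M) * (M * cnorm P) := by
    rw [← mul_assoc, one_div, inv_mul_cancel₀ (ne_of_gt hMpos), one_mul]
  rw [hfin]
  apply mul_le_mul_of_nonneg_left key
  positivity
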